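/- Let q be a real sequence of length n with every entry strictly less than 1/2, and let s ∈ {0,1}^ℓ be a binary sequence with ℓ ≤ n such that in some minimum-cost DTW matching M between q and s every character of q has degree 1. If s contains at least one 0, then there exists a minimum-cost DTW matching in which every position i with s[i] = 1 has degree 1. -/

import Mathlib

/-- `IsMatching n ℓ M`: `M` is a (DTW-style) matching between positions `0,…,n-1` of a
query and positions `0,…,ℓ-1` of an input: every position is covered, the first positions
are matched to each other and the last positions are matched to each other, and edges are
monotone non-crossing. -/
def IsMatching (n ℓ : ℕ) (M : Finset (ℕ × ℕ)) : Prop :=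
  (∀ e ∈ M, e.1 < n ∧ e.2 < ℓ) ∧
  (∀ i, i < n → ∃ j, (i, j) ∈ M) ∧
  (∀ j, j < ℓ → ∃ i, (i, j) ∈ M) ∧
  (0, 0) ∈ M ∧ (n - 1, ℓ - 1) ∈ M ∧
  (∀ e ∈ M, ∀ f ∈ M, (f.1 < e.1 → f.2 ≤ e.2) ∧ (f.2 < e.2 → f.1 ≤ e.1))

/-- The cost of a matching: the sum over edges `(i,j)` of `|q[i] - s[j]|`. -/
noncomputable def matchCost (q s : List ℝ) (M : Finset (ℕ × ℕ)) : ℝ :=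
  ∑ e ∈ M, |q.getD e.1 0 - s.getD e.2 0|

/-- The degree of query position `i` in `M`. -/
def degQ (M : Finset (ℕ × ℕ)) (i : ℕ) : ℕ := (M.filter (fun e => e.1 = i)).card

/-- The degree of input position `j` in `M`. -/
def degS (M : Finset (ℕ × ℕ)) (j : ℕ) : ℕ := (M.filter (fun e => e.2 = j)).card

lemma abs_lt_abs_sub_one' {x : ℝ} (h : x < 1/2) : |x| < |x - 1| := by
  rw [abs_of_neg (by linarith : x - 1 < 0)]
  rcases abs_cases x with ⟨h1,_⟩|⟨h1,_⟩ <;> linarith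


lemma isMatching_rematch (n ℓ : ℕ) (N : Finset (ℕ×ℕ)) (hN : IsMatching n ℓ N)
    (a b b' : ℕ) (hab : (a,b) ∈ N) (hb' : b' < ℓ)
    (hcov : ∃ a2, (a2, b) ∈ N ∧ a2 ≠ a)
    (h00 : (a,b) ≠ ((0:ℕ),(0:ℕ))) (hnl : (a,b) ≠ (n-1, ℓ-1))
    (hcross : ∀ f ∈ N, f ≠ (a,b) →
      (f.1 < a → f.2 ≤ b') ∧ (f.2 < b' → f.1 ≤ a) ∧ (a < f.1 → b' ≤ f.2) ∧ (b' < f.2 → a ≤ f.1)) :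
    IsMatching n ℓ (insert (a,b') (N.erase (a,b))) := by
  obtain ⟨hbd, hcq, hcs, h0, h1, hmono⟩ := hN
  refine ⟨?_, ?_, ?_, ?_, ?_, ?_⟩
  · intro e he
    rcases Finset.mem_insert.mp he with rfl | he
    · exact ⟨(hbd _ hab).1, hb'⟩
    · exact hbd _ (Finset.mem_of_mem_erase he)
  · intro i hi
    by_cases hia : i = a
    · exact ⟨b', by simp [hia]⟩
    · obtain ⟨jj, hjj⟩ := hcq i hi
      exact ⟨jj, Finset.mem_insert_of_mem (Finset.mem_erase.mpr ⟨by simp [hia], hjj⟩)⟩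
  · intro j hj
    by_cases hjb : j = b
    · obtain ⟨a2, ha2, ha2ne⟩ := hcov
      exact ⟨a2, Finset.mem_insert_of_mem (Finset.mem_erase.mpr ⟨by simp [hjb, ha2ne], by rw [hjb]; exact ha2⟩)⟩
    · obtain ⟨i2, hi2⟩ := hcs j hj
      exact ⟨i2, Finset.mem_insert_of_mem (Finset.mem_erase.mpr ⟨by simp [hjb], hi2⟩)⟩
  · exact Finset.mem_insert_of_mem (Finset.mem_erase.mpr ⟨Ne.symm h00, h0⟩)
  · exact Finset.mem_insert_of_mem (Finset.mem_erase.mpr ⟨Ne.symm hnl, h1⟩)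
  · intro e he f hf
    rcases Finset.mem_insert.mp he with rfl | he <;> rcases Finset.mem_insert.mp hf with rfl | hf
    · exact ⟨fun h => absurd h (lt_irrefl _), fun h => absurd h (lt_irrefl _)⟩
    · obtain ⟨hfne, hfN⟩ := Finset.mem_erase.mp hf
      obtain ⟨c1, c2, _, _⟩ := hcross f hfN hfne
      exact ⟨c1, c2⟩
    · obtain ⟨hene, heN⟩ := Finset.mem_erase.mp he
      obtain ⟨_, _, c3, c4⟩ := hcross e heN hene
      exact ⟨c3, c4⟩
    · exact hmono e (Finset.mem_of_mem_erase he) f (Finset.mem_of_mem_erase hf)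


lemma step_lemma (n ℓ : ℕ) (q s : List ℝ) (hqlen : q.length = n) (hslen : s.length = ℓ)
    (hqlt : ∀ c ∈ q, c < 1/2) (hbin : ∀ c ∈ s, c = 0 ∨ c = 1)
    (z : ℕ) (N : Finset (ℕ×ℕ)) (hN : IsMatching n ℓ N)
    (a j b' : ℕ) (hab : (a,j) ∈ N) (hb' : b' < ℓ) (hsj : s.getD j 0 = 1)
    (hcov : ∃ a2, (a2, j) ∈ N ∧ a2 ≠ a)
    (h00 : (a,j) ≠ ((0:ℕ),(0:ℕ))) (hnl : (a,j) ≠ (n-1, ℓ-1))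
    (hcross : ∀ f ∈ N, f ≠ (a,j) →
      (f.1 < a → f.2 ≤ b') ∧ (f.2 < b' → f.1 ≤ a) ∧ (a < f.1 → b' ≤ f.2) ∧ (b' < f.2 → a ≤ f.1))
    (hdist : (b' - z) + (z - b') + 1 = (j - z) + (z - j)) :
    ∃ N', IsMatching n ℓ N' ∧
      (matchCost q s N' < matchCost q s N ∨
       (matchCost q s N' = matchCost q s N ∧
        ∑ e ∈ N', ((e.2 - z) + (z - e.2)) < ∑ e ∈ N, ((e.2 - z) + (z - e.2)))) := by
  have hbne : b' ≠ j := by omega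
  have hN' := isMatching_rematch n ℓ N hN a j b' hab hb' hcov h00 hnl hcross
  refine ⟨insert (a,b') (N.erase (a,j)), hN', ?_⟩
  have ha_n : a < n := (hN.1 _ hab).1
  have hqa : q.getD a 0 < 1/2 := by
    rw [List.getD_eq_getElem q 0 (hqlen ▸ ha_n)]
    exact hqlt _ (List.getElem_mem _)
  have habs : (0:ℝ) < |q.getD a 0 - s.getD j 0| := by
    rw [hsj]; exact abs_pos.mpr (by linarith)
  by_cases hmem : (a,b') ∈ N
  · left
    have heq : insert (a,b') (N.erase (a,j)) = N.erase (a,j) :=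
      Finset.insert_eq_self.mpr (Finset.mem_erase.mpr ⟨by simp [hbne], hmem⟩)
    rw [heq]
    unfold matchCost
    rw [Finset.sum_erase_eq_sub hab]
    linarith
  · have hni : (a,b') ∉ N.erase (a,j) := fun h => hmem (Finset.mem_of_mem_erase h)
    have hcost' : matchCost q s (insert (a,b') (N.erase (a,j))) =
        |q.getD a 0 - s.getD b' 0| + (matchCost q s N - |q.getD a 0 - s.getD j 0|) := by
      unfold matchCost
      rw [Finset.sum_insert hni, Finset.sum_erase_eq_sub hab]
    have hsb' : s.getD b' 0 = 0 ∨ s.getD b' 0 = 1 := by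
      rw [List.getD_eq_getElem s 0 (hslen ▸ hb')]
      exact hbin _ (List.getElem_mem _)
    rcases hsb' with h0' | h1'
    · left
      rw [hcost', h0', hsj]
      have := abs_lt_abs_sub_one' hqa
      rw [hsj] at habs
      simp only [sub_zero]
      linarith
    · right
      constructor
      · rw [hcost', h1', hsj]; ring
      · have e1 : ∑ e ∈ N.erase (a,j), ((e.2 - z) + (z - e.2)) + ((j - z) + (z - j))
            = ∑ e ∈ N, ((e.2 - z) + (z - e.2)) :=
          Finset.sum_erase_add N _ hab
        have e2 : ∑ e ∈ insert (a,b') (N.erase (a,j)), ((e.2 - z) + (z - e.2))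
            = ((b' - z) + (z - b')) + ∑ e ∈ N.erase (a,j), ((e.2 - z) + (z - e.2)) :=
          Finset.sum_insert hni
        omega

set_option maxHeartbeats 800000 in
lemma key_lemma (n ℓ : ℕ) (q s : List ℝ) (hqlen : q.length = n) (hslen : s.length = ℓ)
    (hqlt : ∀ c ∈ q, c < 1/2) (hbin : ∀ c ∈ s, c = 0 ∨ c = 1)
    (z : ℕ) (hz : z < ℓ) (hsz : s.getD z 0 = 0)
    (c : ℝ) (hc : ∀ M', IsMatching n ℓ M' → c ≤ matchCost q s M') :
    ∀ m : ℕ, ∀ N, IsMatching n ℓ N → matchCost q s N = c →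
      (∑ e ∈ N, ((e.2 - z) + (z - e.2))) ≤ m →
      ∃ N', IsMatching n ℓ N' ∧ matchCost q s N' = c ∧
        ∀ i, i < ℓ → s.getD i 0 = 1 → degS N' i = 1 := by
  intro m
  induction m using Nat.strong_induction_on with
  | _ m ih =>
    intro N hN hcost hm
    by_cases hall : ∀ i, i < ℓ → s.getD i 0 = 1 → degS N i = 1
    · exact ⟨N, hN, hcost, hall⟩
    push_neg at hall
    obtain ⟨j, hj, hsj, hdj⟩ := hall
    obtain ⟨i1, hi1⟩ := hN.2.2.1 j hj
    have hd1 : 1 ≤ degS N j :=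
      Finset.card_pos.mpr ⟨(i1,j), Finset.mem_filter.mpr ⟨hi1, rfl⟩⟩
    have hd2 : 2 ≤ (N.filter (fun e => e.2 = j)).card := by
      unfold degS at hd1 hdj; omega
    have hmono := hN.2.2.2.2.2
    have hjz : j ≠ z := fun h => by rw [h, hsz] at hsj; norm_num at hsj
    have hFne : ((N.filter (fun e => e.2 = j)).image Prod.fst).Nonempty :=
      Finset.Nonempty.image (Finset.card_pos.mp (by omega)) _
    rcases lt_or_gt_of_ne hjz with hlt | hgt
    · -- j < z : rematch max of fiber to j+1
      set i' := ((N.filter (fun e => e.2 = j)).image Prod.fst).max' hFne with hi'def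
      have hi'F : (i', j) ∈ N := by
        obtain ⟨e, heF, he1⟩ := Finset.mem_image.mp (Finset.max'_mem _ hFne)
        obtain ⟨heN, he2⟩ := Finset.mem_filter.mp heF
        obtain ⟨ea, eb⟩ := e
        rw [← hi'def] at he1
        simp only at he1 he2
        rw [← he1, ← he2]; exact heN
      have hmax : ∀ e ∈ N, e.2 = j → e.1 ≤ i' := fun e he h2 =>
        Finset.le_max' _ _ (Finset.mem_image.mpr ⟨e, Finset.mem_filter.mpr ⟨he, h2⟩, rfl⟩)
      have hmemF : ((i' : ℕ), j) ∈ N.filter (fun e => e.2 = j) :=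
        Finset.mem_filter.mpr ⟨hi'F, rfl⟩
      have hcard' : 1 ≤ ((N.filter (fun e => e.2 = j)).erase (i',j)).card := by
        rw [Finset.card_erase_of_mem hmemF]; omega
      obtain ⟨e2, he2⟩ := Finset.card_pos.mp hcard'
      obtain ⟨hne, he2F⟩ := Finset.mem_erase.mp he2
      obtain ⟨he2N, he22⟩ := Finset.mem_filter.mp he2F
      have ha2lt : e2.1 < i' := lt_of_le_of_ne (hmax _ he2N he22)
        (fun h => hne (by obtain ⟨ea, eb⟩ := e2; simp only at h he22; rw [h, he22]))
      have hstep := step_lemma n ℓ q s hqlen hslen hqlt hbin z N hN i' j (j+1)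
        hi'F (by omega) hsj
        ⟨e2.1, by
          have : e2 = (e2.1, j) := by obtain ⟨ea, eb⟩ := e2; simp only at he22 ⊢; rw [he22]
          rw [← this]; exact he2N, by omega⟩
        (by simp only [ne_eq, Prod.mk.injEq, not_and]; intro h; omega)
        (by simp only [ne_eq, Prod.mk.injEq, not_and]; intro _; omega)
        (by
          intro f hf hfne
          have m1 := hmono (i',j) hi'F f hf
          have m2 := hmono f hf (i',j) hi'F
          simp only at m1 m2
          refine ⟨fun h => by have := m1.1 h; omega, fun h => ?_, fun h => ?_, fun h => m2.2 (by omega)⟩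
          · rcases eq_or_lt_of_le (by omega : f.2 ≤ j) with h2 | h2
            · exact hmax f hf h2
            · exact m1.2 h2
          · have hj2 := m2.1 h
            rcases eq_or_lt_of_le hj2 with h2 | h2
            · exact absurd (hmax f hf h2.symm) (by omega)
            · omega)
        (by omega)
      obtain ⟨N', hN', hcase⟩ := hstep
      rcases hcase with hltc | ⟨heqc, hSig⟩
      · exact absurd (hc N' hN') (by rw [hcost] at hltc; linarith)
      · exact ih (∑ e ∈ N', ((e.2 - z) + (z - e.2))) (by omega) N' hN' (heqc.trans hcost) le_rfl
    · -- j > z : rematch min of fiber to j-1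
      set i0 := ((N.filter (fun e => e.2 = j)).image Prod.fst).min' hFne with hi0def
      have hi0F : (i0, j) ∈ N := by
        obtain ⟨e, heF, he1⟩ := Finset.mem_image.mp (Finset.min'_mem _ hFne)
        obtain ⟨heN, he2⟩ := Finset.mem_filter.mp heF
        obtain ⟨ea, eb⟩ := e
        rw [← hi0def] at he1
        simp only at he1 he2
        rw [← he1, ← he2]; exact heN
      have hmin : ∀ e ∈ N, e.2 = j → i0 ≤ e.1 := fun e he h2 =>
        Finset.min'_le _ _ (Finset.mem_image.mpr ⟨e, Finset.mem_filter.mpr ⟨he, h2⟩, rfl⟩)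
      have hmemF : ((i0 : ℕ), j) ∈ N.filter (fun e => e.2 = j) :=
        Finset.mem_filter.mpr ⟨hi0F, rfl⟩
      have hcard' : 1 ≤ ((N.filter (fun e => e.2 = j)).erase (i0,j)).card := by
        rw [Finset.card_erase_of_mem hmemF]; omega
      obtain ⟨e2, he2⟩ := Finset.card_pos.mp hcard'
      obtain ⟨hne, he2F⟩ := Finset.mem_erase.mp he2
      obtain ⟨he2N, he22⟩ := Finset.mem_filter.mp he2F
      have ha2gt : i0 < e2.1 := lt_of_le_of_ne (hmin _ he2N he22)
        (fun h => hne (by obtain ⟨ea, eb⟩ := e2; simp only at h he22 ⊢; rw [← h, he22]))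
      have he2n : e2.1 < n := (hN.1 _ he2N).1
      have hstep := step_lemma n ℓ q s hqlen hslen hqlt hbin z N hN i0 j (j-1)
        hi0F (by omega) hsj
        ⟨e2.1, by
          have : e2 = (e2.1, j) := by obtain ⟨ea, eb⟩ := e2; simp only at he22 ⊢; rw [he22]
          rw [← this]; exact he2N, by omega⟩
        (by simp only [ne_eq, Prod.mk.injEq, not_and]; intro _; omega)
        (by simp only [ne_eq, Prod.mk.injEq, not_and]; intro h; omega)
        (by
          intro f hf hfne
          have m1 := hmono (i0,j) hi0F f hf
          have m2 := hmono f hf (i0,j) hi0F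
          simp only at m1 m2
          refine ⟨fun h => ?_, fun h => m1.2 (by omega), fun h => by have := m2.1 h; omega, fun h => ?_⟩
          · have hf2 := m1.1 h
            rcases eq_or_lt_of_le hf2 with h2 | h2
            · exact absurd (hmin f hf h2) (by omega)
            · omega
          · rcases eq_or_lt_of_le (by omega : j ≤ f.2) with h2 | h2
            · exact hmin f hf h2.symm
            · exact m2.2 h2)
        (by omega)
      obtain ⟨N', hN', hcase⟩ := hstep
      rcases hcase with hltc | ⟨heqc, hSig⟩
      · exact absurd (hc N' hN') (by rw [hcost] at hltc; linarith)
      · exact ih (∑ e ∈ N', ((e.2 - z) + (z - e.2))) (by omega) N' hN' (heqc.trans hcost) le_rfl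

/-- Let `q` be a real sequence of length `n` with all entries `< 1/2` and
let `s` be a binary sequence of length `ℓ ≤ n` containing at least one `0`.  If in some
minimum-cost matching between `q` and `s` every character of `q` has degree `1`, then
there exists a minimum-cost matching in which every position `i` with `s[i] = 1` has
degree `1`. -/
theorem exists_optimal_matching_ones_degree_one
    (n ℓ : ℕ) (q s : List ℝ) (hqlen : q.length = n) (hslen : s.length = ℓ)
    (hℓn : ℓ ≤ n)
    (hqlt : ∀ c ∈ q, c < 1 / 2)
    (hbin : ∀ c ∈ s, c = 0 ∨ c = 1) (hzero : (0 : ℝ) ∈ s)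
    (M : Finset (ℕ × ℕ)) (hM : IsMatching n ℓ M)
    (hopt : ∀ M' : Finset (ℕ × ℕ), IsMatching n ℓ M' →
      matchCost q s M ≤ matchCost q s M')
    (hdeg : ∀ i, i < n → degQ M i = 1) :
    ∃ N : Finset (ℕ × ℕ), IsMatching n ℓ N ∧
      (∀ M' : Finset (ℕ × ℕ), IsMatching n ℓ M' →
        matchCost q s N ≤ matchCost q s M') ∧
      ∀ i, i < ℓ → s.getD i 0 = 1 → degS N i = 1 := by
  obtain ⟨z, hz, hz0⟩ := List.mem_iff_getElem.mp hzero
  have hzℓ : z < ℓ := hslen ▸ hz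
  have hsz : s.getD z 0 = 0 := by rw [List.getD_eq_getElem s 0 hz, hz0]
  obtain ⟨N, hN, hcost, hdeg1⟩ := key_lemma n ℓ q s hqlen hslen hqlt hbin z hzℓ hsz
    (matchCost q s M) hopt (∑ e ∈ M, ((e.2 - z) + (z - e.2))) M hM rfl le_rfl
  exact ⟨N, hN, fun M' hM' => by rw [hcost]; exact hopt M' hM', hdeg1⟩
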